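/- If N ≥ 1 and i is an index with 0 ≤ i, i+3 ≤ 4^N−1 and i mod 4 = 0, then i and i+3 lie in the same first-order subcurve (⌊i/4⌋ = ⌊(i+3)/4⌋), both are corner nodes, and the nodes h_N(i) and h_N(i+3) are edge connected. -/

import Mathlib

/-- The `N`-th order approximated Hilbert curve, mapping indices `{0,...,4^N-1}`
to nodes of the grid `{0,...,2^N-1} × {0,...,2^N-1} ⊆ ℤ × ℤ`. -/
def hilbert : ℕ → ℕ → ℤ × ℤ
  | 0, _ => (0, 0)
  | 1, i =>
    if i = 0 then (0, 0)
    else if i = 1 then (0, 1)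
    else if i = 2 then (1, 1)
    else (1, 0)
  | N + 2, i =>
    let q := i / 4 ^ (N + 1)
    let s : ℤ := 2 ^ (N + 1)
    let p := hilbert (N + 1) (i % 4 ^ (N + 1))
    if q = 0 then (p.2, p.1)
    else if q = 1 then (p.1, p.2 + s)
    else if q = 2 then (p.1 + s, p.2 + s)
    else (2 * s - 1 - p.2, s - 1 - p.1)

/-- Euclidean distance between two points of `ℤ × ℤ`. -/
noncomputable def euclDist (a b : ℤ × ℤ) : ℝ :=
  Real.sqrt (((a.1 - b.1 : ℤ) : ℝ) ^ 2 + ((a.2 - b.2 : ℤ) : ℝ) ^ 2)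

/-- Two points of `ℤ × ℤ` are edge connected if their Euclidean distance equals 1. -/
def EdgeConnected (a b : ℤ × ℤ) : Prop := euclDist a b = 1

/-- Two points of `ℤ × ℤ` are vertex connected if both coordinates differ by exactly 1. -/
def VertexConnected (a b : ℤ × ℤ) : Prop := |a.1 - b.1| = 1 ∧ |a.2 - b.2| = 1

/-- Membership in the grid `{0,...,2^N-1} × {0,...,2^N-1}`. -/
def InGrid (N : ℕ) (p : ℤ × ℤ) : Prop :=
  0 ≤ p.1 ∧ p.1 ≤ 2 ^ N - 1 ∧ 0 ≤ p.2 ∧ p.2 ≤ 2 ^ N - 1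

/-- The closed segment from `u` to `v` (centres of cells, viewed in `ℝ²`) is disjoint
from the open unit cell centred at `c`. -/
def SegAvoidsCell (u v c : ℤ × ℤ) : Prop :=
  ∀ t : ℝ, t ∈ Set.Icc (0 : ℝ) 1 →
    ¬ (|(1 - t) * (u.1 : ℝ) + t * (v.1 : ℝ) - (c.1 : ℝ)| < 1 / 2 ∧
       |(1 - t) * (u.2 : ℝ) + t * (v.2 : ℝ) - (c.2 : ℝ)| < 1 / 2)

/-- An evasion tour for the blocked index set `B` on the `N`-th order Hilbert grid:
a sequence of waypoints `w 0, ..., w m` in the grid, starting at the entry node,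
ending at the exit node, avoiding all blocked nodes, covering every unblocked grid
point, and whose straight-line segments avoid the interiors of all blocked cells. -/
def IsEvasionTour (N : ℕ) (B : Finset ℕ) (m : ℕ) (w : ℕ → ℤ × ℤ) : Prop :=
  w 0 = hilbert N 0 ∧
  w m = hilbert N (4 ^ N - 1) ∧
  (∀ j ≤ m, InGrid N (w j)) ∧
  (∀ j ≤ m, ∀ b ∈ B, w j ≠ hilbert N b) ∧
  (∀ p : ℤ × ℤ, InGrid N p → (∀ b ∈ B, p ≠ hilbert N b) → ∃ j ≤ m, w j = p) ∧
  (∀ j < m, ∀ b ∈ B, SegAvoidsCell (w j) (w (j + 1)) (hilbert N b))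

lemma hilbert_adj_aux : ∀ N : ℕ, 1 ≤ N → ∀ i : ℕ, i + 3 ≤ 4 ^ N - 1 → i % 4 = 0 →
    ((hilbert N i).1 - (hilbert N (i + 3)).1) ^ 2 +
      ((hilbert N i).2 - (hilbert N (i + 3)).2) ^ 2 = 1 := by
  intro N
  induction N with
  | zero => omega
  | succ n ih =>
    intro _ i hi hmod
    match n, ih with
    | 0, _ =>
      norm_num at hi
      have : i = 0 := by omega
      subst this
      decide
    | (m + 1), ih =>
      have hM : (0:ℕ) < 4 ^ (m + 1) := Nat.pow_pos (by norm_num)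
      have h4M : (4:ℕ) ∣ 4 ^ (m + 1) := dvd_pow_self 4 (by omega)
      have h4i : (4:ℕ) ∣ i % 4 ^ (m + 1) := by
        have : (4:ℕ) ∣ i := by omega
        exact (Nat.dvd_mod_iff h4M).mpr this
      have hlt : i % 4 ^ (m + 1) < 4 ^ (m + 1) := Nat.mod_lt _ hM
      have hM4 : 4 ≤ 4 ^ (m + 1) := by
        calc (4:ℕ) = 4 ^ 1 := by norm_num
        _ ≤ 4 ^ (m + 1) := Nat.pow_le_pow_right (by norm_num) (by omega)
      have hr3 : i % 4 ^ (m + 1) + 3 < 4 ^ (m + 1) := by omega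
      have hmodeq : (i + 3) % 4 ^ (m + 1) = i % 4 ^ (m + 1) + 3 := by
        rw [Nat.add_mod, Nat.mod_eq_of_lt (show 3 < 4 ^ (m+1) by omega),
          Nat.mod_eq_of_lt hr3]
      have hdiveq : (i + 3) / 4 ^ (m + 1) = i / 4 ^ (m + 1) := by
        have hdm : i = i % 4 ^ (m+1) + i / 4 ^ (m+1) * 4 ^ (m+1) :=
          (Nat.mod_add_div' i _).symm
        conv_lhs => rw [show i + 3 = (i % 4 ^ (m+1) + 3) + (i / 4 ^ (m+1)) * 4 ^ (m+1) by
          omega]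
        rw [Nat.add_mul_div_right _ _ hM, Nat.div_eq_of_lt hr3, Nat.zero_add]
      have hih := ih (by omega) (i % 4 ^ (m + 1)) (by omega)
        (by omega)
      simp only [hilbert, hdiveq, hmodeq]
      split_ifs <;> simp only <;> linear_combination hih

theorem hilbert_mod4_zero_plus_three (N i : ℕ) (hN : 1 ≤ N) (hi : i + 3 ≤ 4 ^ N - 1)
    (hmod : i % 4 = 0) :
    (i + 3) / 4 = i / 4 ∧
    i % 4 ∈ ({0, 3} : Set ℕ) ∧ (i + 3) % 4 ∈ ({0, 3} : Set ℕ) ∧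
    EdgeConnected (hilbert N i) (hilbert N (i + 3)) := by
  refine ⟨by omega, by simp [hmod], by simp; omega, ?_⟩
  have key := hilbert_adj_aux N hN i hi hmod
  unfold EdgeConnected euclDist
  rw [show (((hilbert N i).1 - (hilbert N (i+3)).1 : ℤ) : ℝ) ^ 2 +
      (((hilbert N i).2 - (hilbert N (i+3)).2 : ℤ) : ℝ) ^ 2 = 1 by exact_mod_cast key]
  exact Real.sqrt_one
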